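/- Let R be a commutative ring and A = [[a,b],[c,d]] ∈ M₂(R). If A is simply extendable, i.e., there exists (x,y,z,w) ∈ R⁴ with axw + bxz + cyw + dyz = 1, then A is determinant liftable: there exists a unimodular B ∈ M₂(R) congruent to A modulo R·det(A) with det(B) = 0. -/

import Mathlib

open Matrix

theorem stmt5 {R : Type*} [CommRing R] (a b c d : R)
    (h : ∃ x y z w : R, a * x * w + b * x * z + c * y * w + d * y * z = 1) :
    ∃ B : Matrix (Fin 2) (Fin 2) R,
      Ideal.span {B 0 0, B 0 1, B 1 0, B 1 1} = (⊤ : Ideal R) ∧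
      (∀ i j, B i j - (!![a, b; c, d] : Matrix (Fin 2) (Fin 2) R) i j ∈
        Ideal.span {a * d - b * c}) ∧
      B.det = 0 := by
  obtain ⟨x, y, z, w, hx⟩ := h
  set δ := a * d - b * c with hδ
  refine ⟨!![a - δ * (y * z), b + δ * (y * w); c + δ * (x * z), d - δ * (x * w)],
    ?_, ?_, ?_⟩
  · rw [Ideal.eq_top_iff_one]
    have h00 : (a - δ * (y * z)) ∈ Ideal.span
        ({a - δ * (y * z), b + δ * (y * w), c + δ * (x * z), d - δ * (x * w)} : Set R) :=
      Ideal.subset_span (by simp)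
    have h01 : (b + δ * (y * w)) ∈ Ideal.span
        ({a - δ * (y * z), b + δ * (y * w), c + δ * (x * z), d - δ * (x * w)} : Set R) :=
      Ideal.subset_span (by simp)
    have h10 : (c + δ * (x * z)) ∈ Ideal.span
        ({a - δ * (y * z), b + δ * (y * w), c + δ * (x * z), d - δ * (x * w)} : Set R) :=
      Ideal.subset_span (by simp)
    have h11 : (d - δ * (x * w)) ∈ Ideal.span
        ({a - δ * (y * z), b + δ * (y * w), c + δ * (x * z), d - δ * (x * w)} : Set R) :=
      Ideal.subset_span (by simp)
    have key : (1 : R) = x * w * (a - δ * (y * z)) + x * z * (b + δ * (y * w))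
        + y * w * (c + δ * (x * z)) + y * z * (d - δ * (x * w)) := by
      rw [hδ]; linear_combination -hx
    have := Ideal.add_mem _ (Ideal.add_mem _ (Ideal.add_mem _
      (Ideal.mul_mem_left _ (x * w) h00) (Ideal.mul_mem_left _ (x * z) h01))
      (Ideal.mul_mem_left _ (y * w) h10)) (Ideal.mul_mem_left _ (y * z) h11)
    rw [key]; exact this
  · intro i j
    fin_cases i <;> fin_cases j <;> refine Ideal.mem_span_singleton.mpr ?_
    · exact ⟨-(y * z), by simp⟩
    · exact ⟨y * w, by simp⟩
    · exact ⟨x * z, by simp⟩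
    · exact ⟨-(x * w), by simp⟩
  · rw [Matrix.det_fin_two_of, hδ]
    linear_combination (b * c - a * d) * hx
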